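/- Let 1 < α < 2, 1 ≤ q < ∞, δ f(n) := f(n) - f(n+1), and suppose f: ℤ → ℝ satisfies Σ_{j≠0} ( sup_{n∈ℤ} |δf(n+j) - δf(n)| / |j|^{α-1} )^q / |j| < ∞. Then Σ_{n∈ℤ} ( |f(n)|/(1+|n|^α) )^q / (1+|n|) < ∞. -/

import Mathlib

open Finset ENNReal

private lemma two_rpow {x y c : ℝ} (hx : 0 ≤ x) (hy : 0 ≤ y) (hc : 0 ≤ c) :
    (x + y) ^ c ≤ 2 ^ c * (x ^ c + y ^ c) := by
  have h1 : x + y ≤ 2 * max x y := by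
    rcases le_total x y with h | h
    · simp [max_eq_right h]; linarith
    · simp [max_eq_left h]; linarith
  calc (x + y) ^ c ≤ (2 * max x y) ^ c :=
        Real.rpow_le_rpow (by linarith) h1 hc
    _ = 2 ^ c * (max x y) ^ c := Real.mul_rpow (by norm_num) (le_max_of_le_left hx)
    _ ≤ 2 ^ c * (x ^ c + y ^ c) := by
        gcongr
        rcases le_total x y with h | h
        · rw [max_eq_right h]
          nlinarith [Real.rpow_nonneg hx c]
        · rw [max_eq_left h]
          nlinarith [Real.rpow_nonneg hy c]

private lemma max_rpow_le {a b c : ℝ} (ha : 0 ≤ a) (hb : 0 ≤ b) (hc : 0 ≤ c) :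
    (max a b) ^ c ≤ a ^ c + b ^ c := by
  rcases le_total a b with h | h
  · rw [max_eq_right h]; nlinarith [Real.rpow_nonneg ha c, Real.rpow_le_rpow ha h hc]
  · rw [max_eq_left h]; nlinarith [Real.rpow_nonneg hb c, Real.rpow_le_rpow hb h hc]

private lemma tel' {k : ℕ} (hk : 1 ≤ k) :
    ∀ m : ℕ, ∑ N ∈ Finset.Ico k m, ((N : ℝ) ^ 2)⁻¹ ≤ 2 / k := by
  have key : ∀ m : ℕ, k ≤ m → ∑ N ∈ Finset.Ico k m, ((N : ℝ) ^ 2)⁻¹ ≤ 2 / k - 2 / m := by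
    intro m hm
    induction m with
    | zero => simp; omega
    | succ n ih =>
      rcases Nat.lt_or_ge k (n + 1) with h | h
      · have hkn : k ≤ n := by omega
        have h1 : (1 : ℝ) ≤ n := by exact_mod_cast Nat.one_le_iff_ne_zero.mpr (by omega)
        rw [Finset.sum_Ico_succ_top hkn]
        have h2 : ((n : ℝ) ^ 2)⁻¹ ≤ 2 / n - 2 / (n + 1) := by
          rw [div_sub_div _ _ (by linarith) (by linarith),
            inv_le_iff_one_le_mul₀ (by positivity), div_mul_eq_mul_div,
            le_div_iff₀ (by positivity)]
          nlinarith
        have h3 := ih hkn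
        have hn : (n : ℝ) + 1 = ((n + 1 : ℕ) : ℝ) := by push_cast; ring
        calc ∑ N ∈ Finset.Ico k n, ((N : ℝ) ^ 2)⁻¹ + ((n : ℝ) ^ 2)⁻¹
            ≤ (2 / k - 2 / n) + (2 / n - 2 / (n + 1)) := by linarith
          _ = 2 / k - 2 / ((n + 1 : ℕ) : ℝ) := by rw [← hn]; ring
      · have : k = n + 1 := by omega
        subst this
        simp
  intro m
  rcases Nat.lt_or_ge m k with h | h
  · rw [Finset.Ico_eq_empty (by omega)]
    simp
    positivity
  · refine (key m h).trans ?_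
    have : 0 ≤ 2 / (m : ℝ) := by positivity
    linarith

private lemma sumQ {u : ℕ → ℝ} (hu : ∀ k, 0 ≤ u k) (hu0 : u 0 = 0)
    (hU : Summable fun k : ℕ => u k / k) :
    Summable fun N : ℕ => (∑ k ∈ Finset.range (N + 1), u k) / (N : ℝ) ^ 2 := by
  apply summable_of_sum_range_le (c := 2 * ∑' k : ℕ, u k / k)
  · intro n
    have : 0 ≤ ∑ k ∈ Finset.range (n + 1), u k := Finset.sum_nonneg fun k _ => hu k
    positivity
  · intro m
    have step1 : ∀ N ∈ Finset.range m,
        (∑ k ∈ Finset.range (N + 1), u k) / (N : ℝ) ^ 2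
          = ∑ k ∈ Finset.range m, (if k ≤ N then u k / (N : ℝ) ^ 2 else 0) := by
      intro N hN
      rw [Finset.sum_ite, Finset.sum_const_zero, add_zero, Finset.sum_div]
      apply Finset.sum_congr
      · ext k
        simp only [Finset.mem_filter, Finset.mem_range] at *
        omega
      · intros; rfl
    rw [Finset.sum_congr rfl step1, Finset.sum_comm]
    have step2 : ∀ k ∈ Finset.range m,
        ∑ N ∈ Finset.range m, (if k ≤ N then u k / (N : ℝ) ^ 2 else 0)
          = u k * ∑ N ∈ Finset.Ico k m, ((N : ℝ) ^ 2)⁻¹ := by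
      intro k hk
      rw [Finset.mul_sum, Finset.sum_ite, Finset.sum_const_zero, add_zero]
      apply Finset.sum_congr
      · ext N
        simp only [Finset.mem_filter, Finset.mem_range, Finset.mem_Ico] at *
        omega
      · intros; rw [div_eq_mul_inv, mul_comm]
    rw [Finset.sum_congr rfl step2]
    have step3 : ∀ k ∈ Finset.range m,
        u k * ∑ N ∈ Finset.Ico k m, ((N : ℝ) ^ 2)⁻¹ ≤ 2 * (u k / k) := by
      intro k _
      rcases Nat.eq_zero_or_pos k with rfl | hk
      · simp [hu0]
      · rw [mul_comm 2, div_mul_eq_mul_div, mul_div_assoc]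
        exact mul_le_mul_of_nonneg_left (tel' hk m) (hu k)
    calc ∑ k ∈ Finset.range m, u k * ∑ N ∈ Finset.Ico k m, ((N : ℝ) ^ 2)⁻¹
        ≤ ∑ k ∈ Finset.range m, 2 * (u k / k) := Finset.sum_le_sum step3
      _ = 2 * ∑ k ∈ Finset.range m, u k / k := by rw [Finset.mul_sum]
      _ ≤ 2 * ∑' k : ℕ, u k / k := by
          gcongr
          exact Summable.sum_le_tsum _ (fun k _ => div_nonneg (hu k) (Nat.cast_nonneg k)) hU

private lemma sumP {p : ℝ} (hp : 1 < p) : Summable fun N : ℕ => (1 + (N : ℝ)) ^ (-p) := by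
  have h := (Real.summable_nat_rpow (p := -p)).mpr (by linarith)
  have h2 := (summable_nat_add_iff (f := fun N : ℕ => (N : ℝ) ^ (-p)) 1).mpr h
  apply h2.congr
  intro n
  push_cast
  rw [add_comm]

private lemma natAbsSummable {F : ℕ → ℝ} (h : Summable F) :
    Summable fun n : ℤ => F n.natAbs :=
  summable_int_iff_summable_nat_and_neg.mpr ⟨by simpa using h, by simpa using h⟩

set_option maxHeartbeats 1000000 in
theorem stmt12 (α q : ℝ) (hα0 : 1 < α) (hα1 : α < 2) (hq : 1 ≤ q) (f : ℤ → ℝ)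
    (hf : ∑' j : {j : ℤ // j ≠ 0},
        (⨆ n : ℤ, ENNReal.ofReal
            (|(f (n + (j : ℤ)) - f (n + (j : ℤ) + 1)) - (f n - f (n + 1))| /
              |((j : ℤ) : ℝ)| ^ (α - 1))) ^ q /
          ENNReal.ofReal |((j : ℤ) : ℝ)| < ⊤) :
    ∑' n : ℤ, ENNReal.ofReal ((|f n| / (1 + |(n : ℝ)| ^ α)) ^ q / (1 + |(n : ℝ)|)) < ⊤ := by
  have hq0 : (0:ℝ) < q := by linarith
  have hα' : (0:ℝ) < α - 1 := by linarith
  set S : ℤ → ℝ≥0∞ := fun j => ⨆ n : ℤ, ENNReal.ofReal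
      (|(f (n + j) - f (n + j + 1)) - (f n - f (n + 1))| / |(j : ℝ)| ^ (α - 1)) with hS
  set s : ℤ → ℝ := fun j => (S j).toReal with hsdef
  have hs0 : ∀ j, 0 ≤ s j := fun j => ENNReal.toReal_nonneg
  -- finiteness of each sup
  have hSfin : ∀ j : ℤ, j ≠ 0 → S j ≠ ⊤ := by
    intro j hj htop
    have hterm := (ENNReal.le_tsum (f := fun j : {j : ℤ // j ≠ 0} =>
        (S j) ^ q / ENNReal.ofReal |((j : ℤ) : ℝ)|) ⟨j, hj⟩).trans_lt hf
    rw [htop, ENNReal.top_rpow_of_pos hq0, ENNReal.top_div_of_ne_top ENNReal.ofReal_ne_top]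
      at hterm
    exact (lt_irrefl _ hterm)
  -- pointwise bound from the sup
  have hBd : ∀ j : ℤ, j ≠ 0 →
      |(f j - f (j + 1)) - (f 0 - f 1)| ≤ s j * |(j : ℝ)| ^ (α - 1) := by
    intro j hj
    have hjpos : (0:ℝ) < |(j : ℝ)| ^ (α - 1) := by
      apply Real.rpow_pos_of_pos
      simp only [abs_pos, Int.cast_ne_zero]
      exact hj
    have h0 : ENNReal.ofReal
        (|(f (0 + j) - f (0 + j + 1)) - (f 0 - f (0 + 1))| / |(j : ℝ)| ^ (α - 1)) ≤ S j :=
      le_iSup (fun n : ℤ => ENNReal.ofReal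
        (|(f (n + j) - f (n + j + 1)) - (f n - f (n + 1))| / |(j : ℝ)| ^ (α - 1))) 0
    rw [ENNReal.ofReal_le_iff_le_toReal (hSfin j hj)] at h0
    simp only [zero_add] at h0
    rw [div_le_iff₀ hjpos] at h0
    exact h0
  -- summability of s over nonzero integers
  have hC : Summable fun j : {j : ℤ // j ≠ 0} => s (j : ℤ) ^ q / |((j : ℤ) : ℝ)| := by
    have heq : ∀ j : {j : ℤ // j ≠ 0},
        (S (j : ℤ)) ^ q / ENNReal.ofReal |((j : ℤ) : ℝ)|
          = ENNReal.ofReal (s (j : ℤ) ^ q / |((j : ℤ) : ℝ)|) := by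
      intro j
      have hjpos : (0:ℝ) < |((j : ℤ) : ℝ)| := by
        simp only [abs_pos, Int.cast_ne_zero]; exact j.2
      rw [← ENNReal.ofReal_toReal (hSfin j j.2), ENNReal.ofReal_rpow_of_nonneg (hs0 _)
        (le_of_lt hq0), ← ENNReal.ofReal_div_of_pos hjpos]
    have hne : ∑' j : {j : ℤ // j ≠ 0},
        (S (j : ℤ)) ^ q / ENNReal.ofReal |((j : ℤ) : ℝ)| ≠ ⊤ := hf.ne
    have := ENNReal.summable_toReal hne
    apply this.congr
    intro j
    rw [heq j, ENNReal.toReal_ofReal]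
    positivity
  -- the sequence t and u
  set t : ℕ → ℝ := fun k => if k = 0 then 0 else max (s k) (s (-(k : ℤ))) with ht
  have ht0 : ∀ k, 0 ≤ t k := by
    intro k
    simp only [ht]
    split
    · exact le_rfl
    · exact le_max_of_le_left (hs0 _)
  set u : ℕ → ℝ := fun k => t k ^ q with hu
  have hu0' : ∀ k, 0 ≤ u k := fun k => Real.rpow_nonneg (ht0 k) q
  have hu00 : u 0 = 0 := by
    simp only [hu, ht, if_pos rfl]
    exact Real.zero_rpow (ne_of_gt hq0)
  set B : ℝ := |f 0 - f 1| with hB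
  set A : ℝ := |f 0| with hA
  have hA0 : 0 ≤ A := abs_nonneg _
  have hB0 : 0 ≤ B := abs_nonneg _
  -- bound on differences
  have hdk : ∀ k : ℕ, |f (k : ℤ) - f ((k : ℤ) + 1)| ≤ B + t k * (k : ℝ) ^ (α - 1) ∧
      |f (-(k : ℤ)) - f (-(k : ℤ) + 1)| ≤ B + t k * (k : ℝ) ^ (α - 1) := by
    intro k
    rcases Nat.eq_zero_or_pos k with rfl | hk
    · have h0 : (0:ℝ) ≤ t 0 * (0:ℝ) ^ (α - 1) :=
        mul_nonneg (ht0 0) (Real.rpow_nonneg le_rfl _)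
      constructor <;> (push_cast; norm_num; linarith)
    · have hk' : (k : ℤ) ≠ 0 := by positivity
      have habs : |((k : ℤ) : ℝ)| = (k : ℝ) := by
        push_cast; exact abs_of_nonneg (Nat.cast_nonneg k)
      have htk : t k = max (s k) (s (-(k : ℤ))) := by
        simp only [ht, if_neg (Nat.pos_iff_ne_zero.mp hk)]
      have hrnn : (0:ℝ) ≤ (k : ℝ) ^ (α - 1) := Real.rpow_nonneg (Nat.cast_nonneg k) _
      constructor
      · have h1 := hBd (k : ℤ) hk'
        rw [habs] at h1
        have h2 : s (k : ℤ) * (k : ℝ) ^ (α - 1) ≤ t k * (k : ℝ) ^ (α - 1) := by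
          apply mul_le_mul_of_nonneg_right _ hrnn
          rw [htk]; exact le_max_left _ _
        calc |f (k : ℤ) - f ((k : ℤ) + 1)|
            ≤ |(f (k : ℤ) - f ((k : ℤ) + 1)) - (f 0 - f 1)| + |f 0 - f 1| := by
              have := abs_sub_abs_le_abs_sub (f (k : ℤ) - f ((k : ℤ) + 1)) (f 0 - f 1)
              linarith [abs_nonneg (f 0 - f 1)]
          _ ≤ s (k : ℤ) * (k : ℝ) ^ (α - 1) + B := by exact add_le_add_left h1 B
          _ ≤ B + t k * (k : ℝ) ^ (α - 1) := by rw [add_comm]; exact add_le_add_right h2 B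
      · have hk'' : (-(k : ℤ)) ≠ 0 := by simpa using hk'
        have h1 := hBd (-(k : ℤ)) hk''
        have habs2 : |(Int.cast (-(k : ℤ)) : ℝ)| = (k : ℝ) := by
          rw [show (Int.cast (-(k : ℤ)) : ℝ) = -((k : ℕ) : ℝ) by push_cast; ring, abs_neg]
          exact abs_of_nonneg (Nat.cast_nonneg k)
        rw [habs2] at h1
        have h2 : s (-(k : ℤ)) * (k : ℝ) ^ (α - 1) ≤ t k * (k : ℝ) ^ (α - 1) := by
          apply mul_le_mul_of_nonneg_right _ hrnn
          rw [htk]; exact le_max_right _ _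
        calc |f (-(k : ℤ)) - f (-(k : ℤ) + 1)|
            ≤ |(f (-(k : ℤ)) - f (-(k : ℤ) + 1)) - (f 0 - f 1)| + |f 0 - f 1| := by
              have := abs_sub_abs_le_abs_sub (f (-(k : ℤ)) - f (-(k : ℤ) + 1)) (f 0 - f 1)
              linarith [abs_nonneg (f 0 - f 1)]
          _ ≤ s (-(k : ℤ)) * (k : ℝ) ^ (α - 1) + B := add_le_add_left h1 B
          _ ≤ B + t k * (k : ℝ) ^ (α - 1) := by rw [add_comm]; exact add_le_add_right h2 B
  -- telescoping identities
  have htel1 : ∀ m : ℕ, f 0 - f (m : ℤ) = ∑ k ∈ Finset.range m, (f (k : ℤ) - f ((k : ℤ) + 1)) := by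
    intro m
    induction m with
    | zero => simp
    | succ n ih =>
      rw [Finset.sum_range_succ, ← ih]
      push_cast
      ring
  have htel2 : ∀ m : ℕ, f (-(m : ℤ)) - f 0
      = ∑ k ∈ Finset.range m, (f (-((k : ℤ) + 1)) - f (-((k : ℤ) + 1) + 1)) := by
    intro m
    induction m with
    | zero => simp
    | succ n ih =>
      rw [Finset.sum_range_succ, ← ih]
      have h1 : (-((n : ℤ) + 1) + 1) = -(n : ℤ) := by ring
      have h2 : (-(((n : ℕ) + 1 : ℕ) : ℤ)) = -((n : ℤ) + 1) := by push_cast; ring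
      rw [h1, h2]
      ring
  -- growth bound on |f|
  have hfa : ∀ n : ℤ, |f n| ≤ A + (n.natAbs : ℝ) * B +
      ∑ k ∈ Finset.range (n.natAbs + 1), t k * (k : ℝ) ^ (α - 1) := by
    have hnn : ∀ k : ℕ, 0 ≤ t k * (k : ℝ) ^ (α - 1) := fun k =>
      mul_nonneg (ht0 k) (Real.rpow_nonneg (Nat.cast_nonneg k) _)
    intro n
    obtain ⟨m, rfl | rfl⟩ := Int.eq_nat_or_neg n
    · have hN : ((m : ℤ)).natAbs = m := Int.natAbs_natCast m
      rw [hN]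
      have h1 : |f (m : ℤ)| ≤ A + ∑ k ∈ Finset.range m, |f (k : ℤ) - f ((k : ℤ) + 1)| := by
        have h2 := htel1 m
        have h3 : |f 0 - f (m : ℤ)| ≤ ∑ k ∈ Finset.range m, |f (k : ℤ) - f ((k : ℤ) + 1)| := by
          rw [h2]; exact Finset.abs_sum_le_sum_abs _ _
        have := abs_sub_abs_le_abs_sub (f (m : ℤ)) (f 0)
        rw [abs_sub_comm] at this
        linarith [abs_nonneg (f 0 - f (m : ℤ))]
      have h4 : ∑ k ∈ Finset.range m, |f (k : ℤ) - f ((k : ℤ) + 1)|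
          ≤ ∑ k ∈ Finset.range m, (B + t k * (k : ℝ) ^ (α - 1)) :=
        Finset.sum_le_sum fun k _ => (hdk k).1
      rw [Finset.sum_add_distrib, Finset.sum_const, Finset.card_range, nsmul_eq_mul] at h4
      have h5 : ∑ k ∈ Finset.range m, t k * (k : ℝ) ^ (α - 1)
          ≤ ∑ k ∈ Finset.range (m + 1), t k * (k : ℝ) ^ (α - 1) :=
        Finset.sum_le_sum_of_subset_of_nonneg
          (Finset.range_subset_range.mpr (Nat.le_succ m)) (fun k _ _ => hnn k)
      linarith
    · have hN : ((-(m : ℤ))).natAbs = m := by simp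
      rw [hN]
      have h1 : |f (-(m : ℤ))| ≤ A +
          ∑ k ∈ Finset.range m, |f (-((k : ℤ) + 1)) - f (-((k : ℤ) + 1) + 1)| := by
        have h2 := htel2 m
        have h3 : |f (-(m : ℤ)) - f 0|
            ≤ ∑ k ∈ Finset.range m, |f (-((k : ℤ) + 1)) - f (-((k : ℤ) + 1) + 1)| := by
          rw [h2]; exact Finset.abs_sum_le_sum_abs _ _
        have := abs_sub_abs_le_abs_sub (f (-(m : ℤ))) (f 0)
        linarith [abs_nonneg (f (-(m : ℤ)) - f 0)]
      have h4 : ∑ k ∈ Finset.range m, |f (-((k : ℤ) + 1)) - f (-((k : ℤ) + 1) + 1)|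
          ≤ ∑ k ∈ Finset.range m, (B + t (k + 1) * ((k + 1 : ℕ) : ℝ) ^ (α - 1)) := by
        apply Finset.sum_le_sum
        intro k _
        have := (hdk (k + 1)).2
        have hcast : (-(((k + 1 : ℕ)) : ℤ)) = -((k : ℤ) + 1) := by push_cast; ring
        rw [hcast] at this
        exact this
      rw [Finset.sum_add_distrib, Finset.sum_const, Finset.card_range, nsmul_eq_mul] at h4
      have h5 : ∑ k ∈ Finset.range m, t (k + 1) * ((k + 1 : ℕ) : ℝ) ^ (α - 1)
          ≤ ∑ k ∈ Finset.range (m + 1), t k * (k : ℝ) ^ (α - 1) := by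
        rw [Finset.sum_range_succ' (fun k => t k * (k : ℝ) ^ (α - 1)) m]
        have : (0:ℝ) ≤ t 0 * ((0 : ℕ) : ℝ) ^ (α - 1) := hnn 0
        push_cast
        push_cast at this
        linarith
      linarith
  -- summability of u k / k
  have hU : Summable fun k : ℕ => u k / (k : ℝ) := by
    apply (summable_nat_add_iff 1).mp
    have he1 : Function.Injective (fun k : ℕ => (⟨(k : ℤ) + 1, by omega⟩ : {j : ℤ // j ≠ 0})) := by
      intro a b hab
      simpa [Subtype.ext_iff] using hab
    have he2 : Function.Injective
        (fun k : ℕ => (⟨-((k : ℤ) + 1), by omega⟩ : {j : ℤ // j ≠ 0})) := by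
      intro a b hab
      simpa [Subtype.ext_iff] using hab
    have hsum1 := hC.comp_injective he1
    have hsum2 := hC.comp_injective he2
    have habs1 : ∀ k : ℕ, |(Int.cast ((k : ℤ) + 1) : ℝ)| = (k : ℝ) + 1 := by
      intro k
      rw [show (Int.cast ((k : ℤ) + 1) : ℝ) = (k : ℝ) + 1 by push_cast; ring]
      exact abs_of_nonneg (by positivity)
    have habs2 : ∀ k : ℕ, |(Int.cast (-((k : ℤ) + 1)) : ℝ)| = (k : ℝ) + 1 := by
      intro k
      rw [show (Int.cast (-((k : ℤ) + 1)) : ℝ) = -((k : ℝ) + 1) by push_cast; ring, abs_neg]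
      exact abs_of_nonneg (by positivity)
    apply Summable.of_nonneg_of_le
      (g := fun k : ℕ => u (k + 1) / ((k + 1 : ℕ) : ℝ))
      (f := fun k : ℕ => s ((k : ℤ) + 1) ^ q / |(Int.cast ((k : ℤ) + 1) : ℝ)|
        + s (-((k : ℤ) + 1)) ^ q / |(Int.cast (-((k : ℤ) + 1)) : ℝ)|)
    · intro k
      exact div_nonneg (hu0' _) (Nat.cast_nonneg _)
    · intro k
      have hk1 : (0:ℝ) < (k : ℝ) + 1 := by positivity
      rw [habs1 k, habs2 k]
      have htk : t (k + 1) = max (s ((k + 1 : ℕ) : ℤ)) (s (-((k + 1 : ℕ) : ℤ))) := by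
        simp only [ht, if_neg (Nat.succ_ne_zero k)]
      have hcast1 : ((k + 1 : ℕ) : ℤ) = (k : ℤ) + 1 := by push_cast; ring
      have hmax : u (k + 1) ≤ s ((k : ℤ) + 1) ^ q + s (-((k : ℤ) + 1)) ^ q := by
        show t (k + 1) ^ q ≤ _
        rw [htk, hcast1]
        exact max_rpow_le (hs0 _) (hs0 _) (le_of_lt hq0)
      have hcast2 : ((k + 1 : ℕ) : ℝ) = (k : ℝ) + 1 := by push_cast; ring
      rw [hcast2, ← add_div]
      gcongr
    · exact hsum1.add hsum2
  -- the key pointwise bound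
  have key : ∀ n : ℤ, (|f n| / (1 + |(n : ℝ)| ^ α)) ^ q / (1 + |(n : ℝ)|)
      ≤ 2 ^ q * (((A + B) * 2 ^ α) ^ q * (1 + (n.natAbs : ℝ)) ^ (-((α - 1) * q + 1)))
        + 2 ^ q * (2 ^ q * ((∑ k ∈ Finset.range (n.natAbs + 1), u k) / (n.natAbs : ℝ) ^ 2)) := by
    intro n
    set N : ℕ := n.natAbs with hN
    have habs : |(n : ℝ)| = (N : ℝ) := by
      rw [hN, Nat.cast_natAbs]
      exact (Int.cast_abs).symm
    set Nr : ℝ := (N : ℝ) with hNr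
    have hNr0 : 0 ≤ Nr := Nat.cast_nonneg N
    have hD : (0:ℝ) < 1 + Nr ^ α := by positivity
    have h1N : (0:ℝ) < 1 + Nr := by positivity
    set R : ℝ := ∑ k ∈ Finset.range (N + 1), t k * (k : ℝ) ^ (α - 1) with hR
    set X : ℝ := A + Nr * B with hX
    set U : ℝ := ∑ k ∈ Finset.range (N + 1), u k with hUU
    have hRnn : 0 ≤ R := Finset.sum_nonneg fun k _ =>
      mul_nonneg (ht0 k) (Real.rpow_nonneg (Nat.cast_nonneg k) _)
    have hXnn : 0 ≤ X := by positivity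
    have hUnn : 0 ≤ U := Finset.sum_nonneg fun k _ => hu0' k
    rw [habs]
    -- step 0 : replace |f n|
    have step0 : (|f n| / (1 + Nr ^ α)) ^ q / (1 + Nr)
        ≤ ((X + R) / (1 + Nr ^ α)) ^ q / (1 + Nr) := by
      gcongr
      exact hfa n
    -- split the power of the sum
    have step1 : ((X + R) / (1 + Nr ^ α)) ^ q
        ≤ 2 ^ q * ((X / (1 + Nr ^ α)) ^ q + (R / (1 + Nr ^ α)) ^ q) := by
      rw [add_div]
      exact two_rpow (div_nonneg hXnn hD.le) (div_nonneg hRnn hD.le) (le_of_lt hq0)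
    -- bound for the X part
    have hx : (X / (1 + Nr ^ α)) ^ q / (1 + Nr)
        ≤ ((A + B) * 2 ^ α) ^ q * (1 + Nr) ^ (-((α - 1) * q + 1)) := by
      have hb1 : (1 + Nr) ^ α ≤ 2 ^ α * (1 + Nr ^ α) := by
        rcases Nat.eq_zero_or_pos N with h0 | hNpos
        · have hNr00 : Nr = 0 := by rw [hNr, h0]; norm_num
          rw [hNr00]
          norm_num [Real.zero_rpow (show α ≠ 0 by linarith), Real.one_rpow]
          calc (1:ℝ) = 2 ^ (0:ℝ) := (Real.rpow_zero 2).symm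
            _ ≤ 2 ^ α := Real.rpow_le_rpow_of_exponent_le one_le_two (by linarith)
        · have h1 : (1:ℝ) ≤ Nr := by rw [hNr]; exact_mod_cast hNpos
          calc (1 + Nr) ^ α ≤ (2 * Nr) ^ α := by
                apply Real.rpow_le_rpow (by linarith) (by linarith) (by linarith)
            _ = 2 ^ α * Nr ^ α := Real.mul_rpow (by norm_num) hNr0
            _ ≤ 2 ^ α * (1 + Nr ^ α) := by
                have : (0:ℝ) ≤ 2 ^ α := Real.rpow_nonneg (by norm_num) α
                nlinarith [Real.rpow_nonneg hNr0 α]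
      have hb2 : X ≤ (A + B) * (1 + Nr) := by nlinarith
      have hb3 : X / (1 + Nr ^ α) ≤ (A + B) * 2 ^ α * (1 + Nr) ^ (1 - α) := by
        rw [div_le_iff₀ hD]
        have he1 : (1 + Nr) ^ (1 - α) * (1 + Nr) ^ α = 1 + Nr := by
          rw [← Real.rpow_add h1N]
          norm_num
        calc X ≤ (A + B) * (1 + Nr) := hb2
          _ = (A + B) * ((1 + Nr) ^ (1 - α) * (1 + Nr) ^ α) := by rw [he1]
          _ ≤ (A + B) * ((1 + Nr) ^ (1 - α) * (2 ^ α * (1 + Nr ^ α))) := by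
              have h2 : (0:ℝ) ≤ (1 + Nr) ^ (1 - α) := Real.rpow_nonneg h1N.le _
              have h3 : 0 ≤ A + B := by linarith
              nlinarith [mul_le_mul_of_nonneg_left hb1 h2]
          _ = (A + B) * 2 ^ α * (1 + Nr) ^ (1 - α) * (1 + Nr ^ α) := by ring
      have hb4 : (X / (1 + Nr ^ α)) ^ q
          ≤ ((A + B) * 2 ^ α) ^ q * (1 + Nr) ^ ((1 - α) * q) := by
        have h2a : (0:ℝ) ≤ 2 ^ α := Real.rpow_nonneg (by norm_num) α
        calc (X / (1 + Nr ^ α)) ^ q ≤ ((A + B) * 2 ^ α * (1 + Nr) ^ (1 - α)) ^ q :=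
              Real.rpow_le_rpow (div_nonneg hXnn hD.le) hb3 hq0.le
          _ = ((A + B) * 2 ^ α) ^ q * ((1 + Nr) ^ (1 - α)) ^ q :=
              Real.mul_rpow (by positivity) (Real.rpow_nonneg h1N.le _)
          _ = ((A + B) * 2 ^ α) ^ q * (1 + Nr) ^ ((1 - α) * q) := by
              rw [← Real.rpow_mul h1N.le]
      calc (X / (1 + Nr ^ α)) ^ q / (1 + Nr)
          ≤ (((A + B) * 2 ^ α) ^ q * (1 + Nr) ^ ((1 - α) * q)) / (1 + Nr) := by gcongr
        _ = ((A + B) * 2 ^ α) ^ q * (1 + Nr) ^ (-((α - 1) * q + 1)) := by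
            rw [mul_div_assoc]
            congr 1
            rw [show -((α - 1) * q + 1) = (1 - α) * q - 1 by ring, Real.rpow_sub h1N,
              Real.rpow_one]
    -- bound for the R part
    have hy : (R / (1 + Nr ^ α)) ^ q / (1 + Nr) ≤ 2 ^ q * (U / Nr ^ 2) := by
      rcases Nat.eq_zero_or_pos N with h0 | hNpos
      · have hNr00 : Nr = 0 := by rw [hNr, h0]; norm_num
        have hR0 : R = 0 := by
          rw [hR, h0, Finset.sum_range_one]
          have : ((0:ℕ):ℝ) = 0 := by norm_num
          rw [this, Real.zero_rpow (by linarith : α - 1 ≠ 0), mul_zero]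
        rw [hR0, hNr00, zero_div, Real.zero_rpow (ne_of_gt hq0), zero_div]
        exact mul_nonneg (Real.rpow_nonneg (by norm_num) q) (div_nonneg hUnn (by positivity))
      · have hN1 : (1:ℝ) ≤ Nr := by rw [hNr]; exact_mod_cast hNpos
        have hNr0' : (0:ℝ) < Nr := by linarith
        set T : ℝ := ∑ k ∈ Finset.range (N + 1), t k with hT
        have hTnn : 0 ≤ T := Finset.sum_nonneg fun k _ => ht0 k
        have c1 : R ≤ T * Nr ^ (α - 1) := by
          rw [hR, hT, Finset.sum_mul]
          apply Finset.sum_le_sum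
          intro k hk
          apply mul_le_mul_of_nonneg_left _ (ht0 k)
          apply Real.rpow_le_rpow (Nat.cast_nonneg k) _ (by linarith)
          rw [hNr]
          exact_mod_cast Nat.lt_succ_iff.mp (Finset.mem_range.mp hk)
        have c2 : R / (1 + Nr ^ α) ≤ T * Nr ^ (α - 1) / Nr ^ α := by
          gcongr
          linarith [Real.rpow_nonneg hNr0 α]
        have c3 : T * Nr ^ (α - 1) / Nr ^ α = T / Nr := by
          rw [Real.rpow_sub hNr0', Real.rpow_one]
          have hNα : Nr ^ α ≠ 0 := ne_of_gt (Real.rpow_pos_of_pos hNr0' α)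
          field_simp
        have c4 : (R / (1 + Nr ^ α)) ^ q ≤ T ^ q / Nr ^ (q:ℝ) := by
          rw [← Real.div_rpow hTnn hNr0]
          apply Real.rpow_le_rpow (div_nonneg hRnn hD.le) _ hq0.le
          rw [← c3]; exact c2
        -- Jensen
        have c5 : T ^ q ≤ (Nr + 1) ^ (q:ℝ) * ((1 / (Nr + 1)) * U) := by
          have hNr1 : (0:ℝ) < Nr + 1 := by linarith
          have hw : ∀ i ∈ Finset.range (N + 1), (0:ℝ) ≤ 1 / (Nr + 1) := by
            intro i _; positivity
          have hw' : ∑ _i ∈ Finset.range (N + 1), (1:ℝ) / (Nr + 1) = 1 := by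
            rw [Finset.sum_const, Finset.card_range, nsmul_eq_mul, mul_one_div,
              div_eq_one_iff_eq (ne_of_gt hNr1)]
            push_cast [hNr]
            ring
          have hz : ∀ i ∈ Finset.range (N + 1), (0:ℝ) ≤ t i := fun i _ => ht0 i
          have hj := Real.rpow_arith_mean_le_arith_mean_rpow (Finset.range (N + 1))
            (fun _ => 1 / (Nr + 1)) t hw hw' hz hq
          rw [← Finset.mul_sum, ← Finset.mul_sum] at hj
          rw [Real.mul_rpow (by positivity) hTnn] at hj
          have hone : ((Nr + 1) : ℝ) ^ (q:ℝ) * (1 / (Nr + 1)) ^ (q:ℝ) = 1 := by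
            rw [← Real.mul_rpow hNr1.le (by positivity), mul_one_div,
              div_self (ne_of_gt hNr1), Real.one_rpow]
          calc T ^ q = (Nr + 1) ^ (q:ℝ) * ((1 / (Nr + 1)) ^ (q:ℝ) * T ^ q) := by
                rw [← mul_assoc, hone, one_mul]
            _ ≤ (Nr + 1) ^ (q:ℝ) * ((1 / (Nr + 1)) * U) := by
                apply mul_le_mul_of_nonneg_left _ (Real.rpow_nonneg hNr1.le _)
                exact hj
        have c7 : (Nr + 1) ^ (q:ℝ) ≤ 2 ^ q * Nr ^ (q:ℝ) := by
          calc (Nr + 1) ^ (q:ℝ) ≤ (2 * Nr) ^ (q:ℝ) :=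
                Real.rpow_le_rpow (by linarith) (by linarith) hq0.le
            _ = 2 ^ q * Nr ^ (q:ℝ) := Real.mul_rpow (by norm_num) hNr0
        have hNq : (0:ℝ) < Nr ^ (q:ℝ) := Real.rpow_pos_of_pos hNr0' q
        have hc8 : (R / (1 + Nr ^ α)) ^ q ≤ 2 ^ q * U / (Nr + 1) := by
          have hgoal : T ^ q / Nr ^ (q:ℝ) ≤ 2 ^ q * U / (Nr + 1) := by
            have hUn : (0:ℝ) ≤ (1 / (Nr + 1)) * U := by positivity
            calc T ^ q / Nr ^ (q:ℝ) ≤ ((Nr + 1) ^ (q:ℝ) * ((1 / (Nr + 1)) * U)) / Nr ^ (q:ℝ) := by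
                  gcongr
              _ ≤ ((2 ^ q * Nr ^ (q:ℝ)) * ((1 / (Nr + 1)) * U)) / Nr ^ (q:ℝ) := by
                  gcongr
              _ = 2 ^ q * U / (Nr + 1) := by
                  field_simp
          exact c4.trans hgoal
        calc (R / (1 + Nr ^ α)) ^ q / (1 + Nr) ≤ (2 ^ q * U / (Nr + 1)) / (1 + Nr) := by
              gcongr
          _ ≤ 2 ^ q * (U / Nr ^ 2) := by
              rw [div_div, mul_div_assoc]
              gcongr
              nlinarith
    -- combine
    have hq2 : (0:ℝ) ≤ 2 ^ q := Real.rpow_nonneg (by norm_num) q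
    calc (|f n| / (1 + Nr ^ α)) ^ q / (1 + Nr)
        ≤ ((X + R) / (1 + Nr ^ α)) ^ q / (1 + Nr) := step0
      _ ≤ (2 ^ q * ((X / (1 + Nr ^ α)) ^ q + (R / (1 + Nr ^ α)) ^ q)) / (1 + Nr) := by
          gcongr
      _ = 2 ^ q * ((X / (1 + Nr ^ α)) ^ q / (1 + Nr))
          + 2 ^ q * ((R / (1 + Nr ^ α)) ^ q / (1 + Nr)) := by
          field_simp
      _ ≤ 2 ^ q * (((A + B) * 2 ^ α) ^ q * (1 + Nr) ^ (-((α - 1) * q + 1)))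
          + 2 ^ q * (2 ^ q * (U / Nr ^ 2)) := by
          gcongr
  -- assemble everything
  have hp1 : (1:ℝ) < (α - 1) * q + 1 := by nlinarith
  have hM1 : Summable fun n : ℤ =>
      2 ^ q * (((A + B) * 2 ^ α) ^ q * (1 + (n.natAbs : ℝ)) ^ (-((α - 1) * q + 1))) :=
    ((natAbsSummable (sumP hp1)).mul_left _).mul_left _
  have hM2 : Summable fun n : ℤ =>
      2 ^ q * (2 ^ q * ((∑ k ∈ Finset.range (n.natAbs + 1), u k) / (n.natAbs : ℝ) ^ 2)) :=
    ((natAbsSummable (sumQ hu0' hu00 hU)).mul_left _).mul_left _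
  have hM := hM1.add hM2
  have hg0 : ∀ n : ℤ, 0 ≤ (|f n| / (1 + |(n : ℝ)| ^ α)) ^ q / (1 + |(n : ℝ)|) := by
    intro n
    have h1 : (0:ℝ) < 1 + |(n : ℝ)| ^ α := by positivity
    have h2 : (0:ℝ) < 1 + |(n : ℝ)| := by positivity
    exact div_nonneg (Real.rpow_nonneg (div_nonneg (abs_nonneg _) h1.le) q) h2.le
  have hg : Summable fun n : ℤ => (|f n| / (1 + |(n : ℝ)| ^ α)) ^ q / (1 + |(n : ℝ)|) :=
    Summable.of_nonneg_of_le hg0 key hM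
  rw [← ENNReal.ofReal_tsum_of_nonneg hg0 hg]
  exact ENNReal.ofReal_lt_top
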